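/- arXiv:2010.14760 — 2 statements merged into one kernel-verified Lean document; each statement's English description precedes it below -/
import Mathlib

section
/- Let ψ: ℝ_+ → ℝ_+ be non-increasing with tψ(t) < 1 for large t, and define Ψ(t) = tψ(t)/(1 − tψ(t)). If x ∈ [0,1) is irrational and a_{n+1}(x) a_n(x) > Ψ(q_n(x)) for infinitely many n, then x is ψ-Dirichlet non-improvable, i.e. it is not the case that for all sufficiently large t the system |qx − p| < ψ(t), |q| < t has a nontrivial integer solution. -/
/-- The Gauss map `T(0) = 0`, `T(x) = 1/x (mod 1)`. -/
noncomputable def gaussT (x : ℝ) : ℝ := if x = 0 then 0 else Int.fract x⁻¹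

/-- The `n`-th continued fraction partial quotient of `x`, `aₙ(x) = ⌊1/T^(n-1)(x)⌋` (for `n ≥ 1`). -/
noncomputable def cfA (x : ℝ) (n : ℕ) : ℤ := ⌊(gaussT^[n - 1] x)⁻¹⌋

/-- The numerators `pₙ` of the continued fraction convergents of `x`. -/
noncomputable def cfP (x : ℝ) : ℕ → ℤ
  | 0 => 0
  | 1 => 1
  | n + 2 => cfA x (n + 2) * cfP x (n + 1) + cfP x n

/-- The denominators `qₙ` of the continued fraction convergents of `x`. -/
noncomputable def cfQ (x : ℝ) : ℕ → ℤ
  | 0 => 1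
  | 1 => cfA x 1
  | n + 2 => cfA x (n + 2) * cfQ x (n + 1) + cfQ x n

section aux
variable {x : ℝ}

lemma cfX_mem (hirr : Irrational x) (hx0 : 0 < x) (hx1 : x < 1) :
    ∀ n, Irrational (gaussT^[n] x) ∧ 0 < gaussT^[n] x ∧ gaussT^[n] x < 1 := by
  intro n
  induction n with
  | zero => exact ⟨hirr, hx0, hx1⟩
  | succ n ih =>
    obtain ⟨hi, h0, h1⟩ := ih
    rw [Function.iterate_succ_apply']
    have hne : gaussT^[n] x ≠ 0 := ne_of_gt h0
    have hT : gaussT (gaussT^[n] x) = Int.fract (gaussT^[n] x)⁻¹ := if_neg hne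
    rw [hT]
    have hfr : Irrational (Int.fract (gaussT^[n] x)⁻¹) := by
      rw [Int.fract]; exact hi.inv.sub_intCast _
    exact ⟨hfr, lt_of_le_of_ne (Int.fract_nonneg _) (Ne.symm hfr.ne_zero),
      Int.fract_lt_one _⟩

lemma cfX_succ (hirr : Irrational x) (hx0 : 0 < x) (hx1 : x < 1) (n : ℕ) :
    gaussT^[n + 1] x = (gaussT^[n] x)⁻¹ - cfA x (n + 1) := by
  have h0 := (cfX_mem hirr hx0 hx1 n).2.1
  rw [Function.iterate_succ_apply', gaussT, if_neg (ne_of_gt h0)]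
  rfl

lemma cfA_eq (n : ℕ) : cfA x (n + 1) = ⌊(gaussT^[n] x)⁻¹⌋ := rfl

lemma cfA_pos (hirr : Irrational x) (hx0 : 0 < x) (hx1 : x < 1) (n : ℕ) :
    1 ≤ cfA x (n + 1) := by
  have h := (cfX_mem hirr hx0 hx1 n).2
  rw [cfA_eq]
  exact Int.le_floor.2 (by push_cast; exact (one_le_inv_iff₀.2 ⟨h.1, le_of_lt h.2⟩))

lemma cfQ_pos (hirr : Irrational x) (hx0 : 0 < x) (hx1 : x < 1) :
    ∀ n, 1 ≤ cfQ x n := by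
  intro n
  induction n using Nat.strong_induction_on with
  | _ n ih =>
    match n with
    | 0 => exact le_refl 1
    | 1 => exact cfA_pos hirr hx0 hx1 0
    | n + 2 =>
      have h1 := ih (n + 1) (by omega)
      have h0 := ih n (by omega)
      have ha := cfA_pos hirr hx0 hx1 (n + 1)
      show 1 ≤ cfA x (n + 2) * cfQ x (n + 1) + cfQ x n
      nlinarith

lemma cfQ_ge (hirr : Irrational x) (hx0 : 0 < x) (hx1 : x < 1) :
    ∀ n : ℕ, (n : ℤ) ≤ cfQ x n := by
  intro n
  induction n using Nat.strong_induction_on with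
  | _ n ih =>
    match n with
    | 0 => simp [cfQ]
    | 1 => exact_mod_cast cfA_pos hirr hx0 hx1 0
    | n + 2 =>
      have h1 := ih (n + 1) (by omega)
      have h0 := cfQ_pos hirr hx0 hx1 n
      have h1' := cfQ_pos hirr hx0 hx1 (n + 1)
      have ha := cfA_pos hirr hx0 hx1 (n + 1)
      show ((n : ℤ) + 2) ≤ cfA x (n + 2) * cfQ x (n + 1) + cfQ x n
      push_cast at h1
      nlinarith

lemma cfA_mul_cfQ_le (hirr : Irrational x) (hx0 : 0 < x) (hx1 : x < 1) :
    ∀ n, cfA x (n + 1) * cfQ x n ≤ cfQ x (n + 1) := by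
  intro n
  match n with
  | 0 => simp [cfQ]
  | n + 1 =>
    have h0 := cfQ_pos hirr hx0 hx1 n
    show cfA x (n + 2) * cfQ x (n + 1) ≤ cfA x (n + 2) * cfQ x (n + 1) + cfQ x n
    omega


lemma cfX_inv (hirr : Irrational x) (hx0 : 0 < x) (hx1 : x < 1) (n : ℕ) :
    (gaussT^[n] x)⁻¹ = (cfA x (n + 1) : ℝ) + gaussT^[n + 1] x := by
  rw [cfX_succ hirr hx0 hx1 n]; ring

lemma cf_key (hirr : Irrational x) (hx0 : 0 < x) (hx1 : x < 1) :
    ∀ n : ℕ, ((cfQ x (n + 1) : ℝ) + (cfQ x n : ℝ) * gaussT^[n + 1] x) * x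
      = (cfP x (n + 1) : ℝ) + (cfP x n : ℝ) * gaussT^[n + 1] x := by
  intro n
  induction n with
  | zero =>
    have h := cfX_inv hirr hx0 hx1 0
    simp only [Function.iterate_zero, id_eq] at h
    show ((cfA x 1 : ℝ) + (1 : ℤ) * gaussT^[1] x) * x = ((1:ℤ) : ℝ) + ((0:ℤ) : ℝ) * gaussT^[1] x
    push_cast
    have hxne : x ≠ 0 := ne_of_gt hx0
    field_simp
    field_simp at h
    linarith [h]
  | succ n ih =>
    have h0 := (cfX_mem hirr hx0 hx1 (n + 1)).2.1
    have hinv := cfX_inv hirr hx0 hx1 (n + 1)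
    have hX : gaussT^[n + 1] x * ((cfA x (n + 2) : ℝ) + gaussT^[n + 2] x) = 1 := by
      rw [← hinv, mul_inv_cancel₀ (ne_of_gt h0)]
    show ((cfQ x (n+2) : ℝ) + (cfQ x (n+1) : ℝ) * gaussT^[n + 2] x) * x
      = (cfP x (n+2) : ℝ) + (cfP x (n+1) : ℝ) * gaussT^[n + 2] x
    have hq : (cfQ x (n+2) : ℝ) = (cfA x (n+2) : ℝ) * (cfQ x (n+1) : ℝ) + (cfQ x n : ℝ) := by
      show ((cfA x (n + 2) * cfQ x (n + 1) + cfQ x n : ℤ) : ℝ) = _; push_cast; ring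
    have hp : (cfP x (n+2) : ℝ) = (cfA x (n+2) : ℝ) * (cfP x (n+1) : ℝ) + (cfP x n : ℝ) := by
      show ((cfA x (n + 2) * cfP x (n + 1) + cfP x n : ℤ) : ℝ) = _; push_cast; ring
    rw [hq, hp]
    linear_combination ((cfA x (n+2) : ℝ) + gaussT^[n + 2] x) * ih
      - ((cfQ x n : ℝ) * x - (cfP x n : ℝ)) * hX

lemma cf_det : ∀ n : ℕ, cfP x (n + 1) * cfQ x n - cfP x n * cfQ x (n + 1) = (-1) ^ n := by
  intro n
  induction n with
  | zero => simp [cfP, cfQ]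
  | succ n ih =>
    show cfP x (n + 2) * cfQ x (n + 1) - cfP x (n + 1) * cfQ x (n + 2) = _
    have hq : cfQ x (n + 2) = cfA x (n + 2) * cfQ x (n + 1) + cfQ x n := rfl
    have hp : cfP x (n + 2) = cfA x (n + 2) * cfP x (n + 1) + cfP x n := rfl
    rw [hq, hp, pow_succ]
    linear_combination (-1 : ℤ) * ih

lemma cf_eps (hirr : Irrational x) (hx0 : 0 < x) (hx1 : x < 1) (n : ℕ) :
    ((cfQ x n : ℝ) * x - (cfP x n : ℝ))
      * ((cfQ x (n + 1) : ℝ) + (cfQ x n : ℝ) * gaussT^[n + 1] x) = (-1) ^ n := by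
  have hdet : (cfP x (n + 1) : ℝ) * (cfQ x n : ℝ) - (cfP x n : ℝ) * (cfQ x (n + 1) : ℝ)
      = (-1) ^ n := by exact_mod_cast cf_det n
  linear_combination (cfQ x n : ℝ) * cf_key hirr hx0 hx1 n + hdet

lemma cf_den_pos (hirr : Irrational x) (hx0 : 0 < x) (hx1 : x < 1) (n : ℕ) :
    0 < (cfQ x (n + 1) : ℝ) + (cfQ x n : ℝ) * gaussT^[n + 1] x := by
  have h1 : (1 : ℝ) ≤ (cfQ x (n+1) : ℝ) := by exact_mod_cast cfQ_pos hirr hx0 hx1 (n+1)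
  have h0 : (1 : ℝ) ≤ (cfQ x n : ℝ) := by exact_mod_cast cfQ_pos hirr hx0 hx1 n
  have hX := (cfX_mem hirr hx0 hx1 (n + 1)).2
  nlinarith


lemma cf_eps_ne (hirr : Irrational x) (hx0 : 0 < x) (hx1 : x < 1) (n : ℕ) :
    (cfQ x n : ℝ) * x - (cfP x n : ℝ) ≠ 0 := by
  intro h0
  have := cf_eps hirr hx0 hx1 n
  rw [h0, zero_mul] at this
  have : ((-1 : ℝ)) ^ n ≠ 0 := by positivity
  simp_all

lemma cf_eps_prod (hirr : Irrational x) (hx0 : 0 < x) (hx1 : x < 1) (n : ℕ) :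
    ((cfQ x n : ℝ) * x - (cfP x n : ℝ)) * ((cfQ x (n+1) : ℝ) * x - (cfP x (n+1) : ℝ)) < 0 := by
  have e1 := cf_eps hirr hx0 hx1 n
  have e2 := cf_eps hirr hx0 hx1 (n + 1)
  have d1 := cf_den_pos hirr hx0 hx1 n
  have d2 := cf_den_pos hirr hx0 hx1 (n + 1)
  have h12 : ((-1 : ℝ)) ^ n * (-1) ^ (n + 1) = -1 := by
    rw [pow_succ, ← mul_assoc, ← pow_add, ← two_mul, pow_mul]; norm_num
  have key : (((cfQ x n : ℝ) * x - (cfP x n : ℝ)) * ((cfQ x (n+1) : ℝ) * x - (cfP x (n+1) : ℝ)))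
      * (((cfQ x (n + 1) : ℝ) + (cfQ x n : ℝ) * gaussT^[n + 1] x)
        * ((cfQ x (n + 2) : ℝ) + (cfQ x (n+1) : ℝ) * gaussT^[n + 2] x)) = -1 := by
    linear_combination (((cfQ x (n+1) : ℝ) * x - (cfP x (n+1) : ℝ))
        * ((cfQ x (n + 2) : ℝ) + (cfQ x (n+1) : ℝ) * gaussT^[n + 2] x)) * e1
      + ((-1 : ℝ)) ^ n * e2 + h12
  nlinarith [mul_pos d1 d2]

lemma cf_best (hirr : Irrational x) (hx0 : 0 < x) (hx1 : x < 1) (m : ℕ) (p q : ℤ)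
    (hq : q ≠ 0) (hqlt : |q| < cfQ x (m + 1)) :
    |(cfQ x m : ℝ) * x - (cfP x m : ℝ)| ≤ |(q : ℝ) * x - (p : ℝ)| := by
  set u : ℤ := (-1) ^ m * (cfP x (m+1) * q - cfQ x (m+1) * p) with hu_def
  set v : ℤ := (-1) ^ m * (cfQ x m * p - cfP x m * q) with hv_def
  have hdet := cf_det (x := x) m
  have e : ((-1 : ℤ)) ^ m * (-1) ^ m = 1 := by
    rw [← pow_add, ← two_mul, pow_mul]; norm_num
  have hu : u * cfQ x m + v * cfQ x (m+1) = q := by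
    rw [hu_def, hv_def]
    linear_combination ((-1 : ℤ) ^ m * q) * hdet + q * e
  have hp : u * cfP x m + v * cfP x (m+1) = p := by
    rw [hu_def, hv_def]
    linear_combination ((-1 : ℤ) ^ m * p) * hdet + p * e
  have huR : ((u : ℝ) * (cfQ x m : ℝ) + (v : ℝ) * (cfQ x (m+1) : ℝ)) = (q : ℝ) := by
    exact_mod_cast congrArg (Int.cast : ℤ → ℝ) hu
  have hpR : ((u : ℝ) * (cfP x m : ℝ) + (v : ℝ) * (cfP x (m+1) : ℝ)) = (p : ℝ) := by
    exact_mod_cast congrArg (Int.cast : ℤ → ℝ) hp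
  set E0 : ℝ := (cfQ x m : ℝ) * x - (cfP x m : ℝ) with hE0
  set E1 : ℝ := (cfQ x (m+1) : ℝ) * x - (cfP x (m+1) : ℝ) with hE1
  have hlin : (u : ℝ) * E0 + (v : ℝ) * E1 = (q : ℝ) * x - (p : ℝ) := by
    rw [hE0, hE1]; linear_combination x * huR - hpR
  have hQm := cfQ_pos hirr hx0 hx1 m
  have hQm1 := cfQ_pos hirr hx0 hx1 (m+1)
  by_cases hv : v = 0
  · have hu0 : u ≠ 0 := by
      intro h0; rw [h0, hv] at hu; simp at hu; exact hq hu.symm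
    have : (q : ℝ) * x - (p : ℝ) = (u : ℝ) * E0 := by rw [← hlin, hv]; push_cast; ring
    rw [this, abs_mul]
    have : (1 : ℝ) ≤ |(u : ℝ)| := by
      have := Int.one_le_abs hu0
      calc (1:ℝ) ≤ ((|u| : ℤ) : ℝ) := by exact_mod_cast this
        _ = |(u : ℝ)| := by push_cast; ring
    nlinarith [abs_nonneg E0]
  · have hu0 : u ≠ 0 := by
      intro h0
      rw [h0] at hu; simp at hu
      have h1 : |v * cfQ x (m+1)| = |q| := by rw [hu]
      rw [abs_mul] at h1
      have : 1 ≤ |v| := Int.one_le_abs hv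
      have h2 : |cfQ x (m+1)| = cfQ x (m+1) := abs_of_pos (by omega)
      nlinarith
    have hsign : u * v < 0 := by
      rcases lt_trichotomy (u * v) 0 with h | h | h
      · exact h
      · exact absurd (mul_eq_zero.1 h) (by tauto)
      · exfalso
        have habs : |q| < cfQ x (m+1) := hqlt
        have h3 := abs_lt.1 habs
        rcases lt_or_gt_of_ne hu0 with hun | hup
        · have hvn : v < 0 := by nlinarith
          have : q ≤ -cfQ x (m+1) := by rw [← hu]; nlinarith
          linarith [h3.1]
        · have hvp : 0 < v := by nlinarith
          have : cfQ x (m+1) ≤ q := by rw [← hu]; nlinarith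
          linarith [h3.2]
    have hprod := cf_eps_prod hirr hx0 hx1 m
    rw [← hE0, ← hE1] at hprod
    have hAB : 0 ≤ ((u : ℝ) * E0) * ((v : ℝ) * E1) := by
      have : ((u : ℝ) * E0) * ((v : ℝ) * E1) = ((u * v : ℤ) : ℝ) * (E0 * E1) := by
        push_cast; ring
      rw [this]
      have h1 : ((u * v : ℤ) : ℝ) < 0 := by exact_mod_cast hsign
      nlinarith
    have hu1 : (1 : ℝ) ≤ |(u : ℝ)| := by
      have := Int.one_le_abs hu0
      calc (1:ℝ) ≤ ((|u| : ℤ) : ℝ) := by exact_mod_cast this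
        _ = |(u : ℝ)| := by push_cast; ring
    rw [← hlin]
    set A : ℝ := (u : ℝ) * E0
    set B : ℝ := (v : ℝ) * E1
    have hu2 : (1 : ℝ) ≤ (u : ℝ) ^ 2 := by nlinarith [sq_abs ((u : ℝ))]
    have h1 : E0 ^ 2 ≤ A ^ 2 := by
      have hA : A ^ 2 = (u : ℝ) ^ 2 * E0 ^ 2 := by ring
      rw [hA]; nlinarith [sq_nonneg E0]
    have h2 : A ^ 2 ≤ (A + B) ^ 2 := by nlinarith [sq_nonneg B]
    have h3 : E0 ^ 2 ≤ (A + B) ^ 2 := le_trans h1 h2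
    rw [← sq_abs E0, ← sq_abs (A + B)] at h3
    exact (pow_le_pow_iff_left₀ (abs_nonneg _) (abs_nonneg _) two_ne_zero).1 h3

end aux

/-- `x` is `ψ`-Dirichlet improvable: there exists `N` such that for all `t > N`,
the system `|qx − p| < ψ(t)`, `|q| < t` has a nontrivial integer solution. -/
def DirichletImprovable (ψ : ℝ → ℝ) (x : ℝ) : Prop :=
  ∃ N : ℝ, ∀ t > N, ∃ p q : ℤ, ¬(p = 0 ∧ q = 0) ∧ |(q : ℝ) * x - (p : ℝ)| < ψ t ∧ |(q : ℝ)| < t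

/-- Kleinbock–Wadleigh criterion (non-improvable direction): if `ψ` is non-increasing with
`tψ(t) < 1` for large `t`, `Ψ(t) = tψ(t)/(1 − tψ(t))`, `x ∈ [0,1)` is irrational and
`aₙ₊₁(x)aₙ(x) > Ψ(qₙ(x))` for infinitely many `n`, then `x` is `ψ`-Dirichlet non-improvable. -/
theorem dirichlet_non_improvable (ψ : ℝ → ℝ) (hψpos : ∀ t > (0 : ℝ), 0 < ψ t)
    (hψmono : ∀ s t : ℝ, 0 < s → s ≤ t → ψ t ≤ ψ s)
    (hsmall : ∃ T : ℝ, ∀ t ≥ T, t * ψ t < 1)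
    (x : ℝ) (hx : x ∈ Set.Ico (0 : ℝ) 1) (hirr : Irrational x)
    (h : {n : ℕ | 1 ≤ n ∧
        ((cfA x (n + 1) * cfA x n : ℤ) : ℝ) >
          (cfQ x n : ℝ) * ψ (cfQ x n) / (1 - (cfQ x n : ℝ) * ψ (cfQ x n))}.Infinite) :
    ¬ DirichletImprovable ψ x := by
  obtain ⟨T, hT⟩ := hsmall
  rintro ⟨N, hN⟩
  have hx0 : 0 < x := lt_of_le_of_ne hx.1 (Ne.symm hirr.ne_zero)
  have hx1 : x < 1 := hx.2
  -- choose a large n in the set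
  obtain ⟨n, hnS, hn⟩ := h.exists_gt (⌈max N T⌉₊)
  obtain ⟨hn1, hineq⟩ := hnS
  obtain ⟨m, rfl⟩ : ∃ m, n = m + 1 := ⟨n - 1, by omega⟩
  set Q : ℝ := (cfQ x (m + 1) : ℝ) with hQdef
  have hQn : ((m + 1 : ℕ) : ℤ) ≤ cfQ x (m + 1) := cfQ_ge hirr hx0 hx1 (m + 1)
  have hQbig : max N T < Q := by
    have h1 : (max N T : ℝ) ≤ (⌈max N T⌉₊ : ℝ) := Nat.le_ceil _
    have h2 : ((⌈max N T⌉₊ : ℕ) : ℝ) < ((m + 1 : ℕ) : ℝ) := by exact_mod_cast hn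
    have h3 : ((m + 1 : ℕ) : ℝ) ≤ Q := by rw [hQdef]; exact_mod_cast hQn
    linarith
  have hQ1 : (1 : ℝ) ≤ Q := by
    have h1 : (1 : ℤ) ≤ cfQ x (m + 1) := cfQ_pos hirr hx0 hx1 (m + 1)
    rw [hQdef]; exact_mod_cast h1
  have hQpos : (0 : ℝ) < Q := by linarith
  have hw : Q * ψ Q < 1 := hT Q (le_of_lt (lt_of_le_of_lt (le_max_right N T) hQbig))
  have hψQ : 0 < ψ Q := hψpos Q hQpos
  -- the system at t = Q has a solution by assumption
  obtain ⟨p, q, hpq, hlt, hqlt⟩ := hN Q (lt_of_le_of_lt (le_max_left N T) hQbig)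
  by_cases hq0 : q = 0
  · -- q = 0, p ≠ 0 : |p| ≥ 1 > ψ Q
    have hp0 : p ≠ 0 := by tauto
    have : (1 : ℝ) ≤ |(q : ℝ) * x - (p : ℝ)| := by
      rw [hq0]
      push_cast
      rw [zero_mul, zero_sub, abs_neg]
      have := Int.one_le_abs hp0
      calc (1:ℝ) ≤ ((|p| : ℤ) : ℝ) := by exact_mod_cast this
        _ = |(p : ℝ)| := by push_cast; ring
    have : ψ Q < 1 := by nlinarith
    linarith
  · -- main case
    have hqltZ : |q| < cfQ x (m + 1) := by
      have : |(q : ℝ)| < (cfQ x (m + 1) : ℝ) := hqlt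
      exact_mod_cast this
    have hbest := cf_best hirr hx0 hx1 m p q hq0 hqltZ
    -- |E0| = 1 / d where d = Q + q_m * X(m+1)
    set ξ : ℝ := gaussT^[m + 1] x with hξ
    have hXm := (cfX_mem hirr hx0 hx1 (m + 1)).2
    set d : ℝ := Q + (cfQ x m : ℝ) * ξ with hd
    have hdpos : 0 < d := cf_den_pos hirr hx0 hx1 m
    have heps := cf_eps hirr hx0 hx1 m
    have habs : |(cfQ x m : ℝ) * x - (cfP x m : ℝ)| * d = 1 := by
      have h := congrArg abs heps
      rw [abs_mul, abs_of_pos hdpos, abs_pow, abs_neg, abs_one, one_pow] at h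
      exact h
    -- arithmetic: ψ Q * d ≤ 1
    have hqm : (1 : ℝ) ≤ (cfQ x m : ℝ) := by exact_mod_cast cfQ_pos hirr hx0 hx1 m
    have ha1 : (1 : ℝ) ≤ (cfA x (m + 1) : ℝ) := by exact_mod_cast cfA_pos hirr hx0 hx1 m
    have ha2 : (1 : ℝ) ≤ (cfA x (m + 2) : ℝ) := by exact_mod_cast cfA_pos hirr hx0 hx1 (m + 1)
    have hfloor : ((cfA x (m + 2) : ℤ) : ℝ) ≤ ξ⁻¹ := by
      rw [hξ]; exact Int.floor_le _
    have ha2ξ : (cfA x (m + 2) : ℝ) * ξ ≤ 1 := by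
      have := mul_le_mul_of_nonneg_right hfloor (le_of_lt hXm.1)
      rwa [inv_mul_cancel₀ (ne_of_gt hXm.1)] at this
    have ha1q : (cfA x (m + 1) : ℝ) * (cfQ x m : ℝ) ≤ Q := by
      rw [hQdef]; exact_mod_cast cfA_mul_cfQ_le hirr hx0 hx1 m
    have h1ms : (0 : ℝ) < 1 - Q * ψ Q := by linarith
    have h4 : Q * ψ Q < ((cfA x (m + 2) : ℝ) * (cfA x (m + 1) : ℝ)) * (1 - Q * ψ Q) := by
      rw [gt_iff_lt, div_lt_iff₀ h1ms] at hineq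
      push_cast at hineq
      linarith
    have h5 : ((cfA x (m + 2) : ℝ) * ξ) * ((cfA x (m + 1) : ℝ) * (cfQ x m : ℝ)) ≤ 1 * Q := by
      apply mul_le_mul ha2ξ ha1q (by nlinarith) (by norm_num)
    have hqξ : (0 : ℝ) < (cfQ x m : ℝ) * ξ := by nlinarith [hXm.1]
    have h6 := mul_lt_mul_of_pos_right h4 hqξ
    have h7 := mul_le_mul_of_nonneg_left h5 (le_of_lt h1ms)
    have h8 : (Q * ψ Q) * ((cfQ x m : ℝ) * ξ) < (1 - Q * ψ Q) * Q := by
      calc (Q * ψ Q) * ((cfQ x m : ℝ) * ξ)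
          < ((cfA x (m + 2) : ℝ) * (cfA x (m + 1) : ℝ) * (1 - Q * ψ Q))
              * ((cfQ x m : ℝ) * ξ) := h6
        _ = (1 - Q * ψ Q) * (((cfA x (m + 2) : ℝ) * ξ) * ((cfA x (m + 1) : ℝ) * (cfQ x m : ℝ))) := by
            ring
        _ ≤ (1 - Q * ψ Q) * (1 * Q) := h7
        _ = (1 - Q * ψ Q) * Q := by ring
    have hψd : ψ Q * d ≤ 1 := by
      have h9 : ψ Q * d * Q < 1 * Q := by rw [hd]; linarith only [h8]
      exact le_of_lt (lt_of_mul_lt_mul_right h9 (le_of_lt hQpos))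
    have hψE : ψ Q ≤ |(cfQ x m : ℝ) * x - (cfP x m : ℝ)| := by
      have : ψ Q * d ≤ |(cfQ x m : ℝ) * x - (cfP x m : ℝ)| * d := by rw [habs]; exact hψd
      exact le_of_mul_le_mul_right this hdpos
    linarith
end

section
/- If Ψ: ℕ → ℝ_+ satisfies Ψ(Q^x) ≍ Ψ(Q) for all x > 0 (with implied constants depending only on x), then for f a dimension function, the double series ∑_{k≥1} ∑_{1≤j<log₂Ψ(2^k)} 2^{2k+j} f(2^{-(2k+j)}/Ψ(2^{k+j/2})) converges if and only if ∑_{k≥1} ∑_{1≤j<log₂Ψ(2^k)} 2^{2k+j} f(2^{-(2k+j)}/Ψ(2^{k+j})) converges. -/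
open Finset

namespace SSE

/-- inner index bound -/
noncomputable def NN (Ψ : ℝ → ℝ) (k : ℕ) : ℕ := ⌈Real.logb 2 (Ψ ((2 : ℝ) ^ (k + 1)))⌉₊

/-- summand of the first series -/
noncomputable def g1 (Ψ f : ℝ → ℝ) (k j : ℕ) : ℝ :=
  (2 : ℝ) ^ (2 * (k + 1) + j) *
    f (((2 : ℝ) ^ (2 * (k + 1) + j))⁻¹ / Ψ ((2 : ℝ) ^ (((k : ℝ) + 1) + (j : ℝ) / 2)))

/-- summand of the second series -/
noncomputable def g2 (Ψ f : ℝ → ℝ) (k j : ℕ) : ℝ :=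
  (2 : ℝ) ^ (2 * (k + 1) + j) *
    f (((2 : ℝ) ^ (2 * (k + 1) + j))⁻¹ / Ψ ((2 : ℝ) ^ (k + 1 + j)))

lemma arg1_pos (Ψ : ℝ → ℝ) (hΨpos : ∀ t : ℝ, 0 < Ψ t) (k j : ℕ) :
    0 < ((2 : ℝ) ^ (2 * (k + 1) + j))⁻¹ / Ψ ((2 : ℝ) ^ (((k : ℝ) + 1) + (j : ℝ) / 2)) :=
  div_pos (by positivity) (hΨpos _)

lemma arg2_pos (Ψ : ℝ → ℝ) (hΨpos : ∀ t : ℝ, 0 < Ψ t) (k j : ℕ) :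
    0 < ((2 : ℝ) ^ (2 * (k + 1) + j))⁻¹ / Ψ ((2 : ℝ) ^ (k + 1 + j)) :=
  div_pos (by positivity) (hΨpos _)

lemma g1_nonneg (Ψ f : ℝ → ℝ) (hΨpos : ∀ t : ℝ, 0 < Ψ t)
    (hpos : ∀ r > (0 : ℝ), 0 < f r) (k j : ℕ) : 0 ≤ g1 Ψ f k j :=
  le_of_lt (mul_pos (by positivity) (hpos _ (arg1_pos Ψ hΨpos k j)))

lemma g2_nonneg (Ψ f : ℝ → ℝ) (hΨpos : ∀ t : ℝ, 0 < Ψ t)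
    (hpos : ∀ r > (0 : ℝ), 0 < f r) (k j : ℕ) : 0 ≤ g2 Ψ f k j :=
  le_of_lt (mul_pos (by positivity) (hpos _ (arg2_pos Ψ hΨpos k j)))

/-- monotonicity of `Ψ ∘ (2 ^ ·)` in the (real) exponent -/
lemma psi_rpow_mono (Ψ : ℝ → ℝ) (hΨmono : Monotone Ψ) {x y : ℝ} (h : x ≤ y) :
    Ψ ((2 : ℝ) ^ x) ≤ Ψ ((2 : ℝ) ^ y) :=
  hΨmono (Real.rpow_le_rpow_of_exponent_le one_le_two h)

/-- The doubling bound from the growth hypothesis at exponent `2`. -/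
lemma psi_double (Ψ : ℝ → ℝ) (c₂ : ℝ)
    (hgr : ∀ Q > (1 : ℝ), Ψ (Q ^ (2 : ℝ)) ≤ c₂ * Ψ Q)
    {y : ℝ} (hy : 1 ≤ y) : Ψ ((2 : ℝ) ^ (2 * y)) ≤ c₂ * Ψ ((2 : ℝ) ^ y) := by
  have hQ : (1 : ℝ) < (2 : ℝ) ^ y :=
    (Real.one_lt_rpow_iff_of_pos (by norm_num)).2 (Or.inl ⟨one_lt_two, by linarith⟩)
  have h2 := hgr _ hQ
  rw [show (2 : ℝ) * y = y * 2 from mul_comm _ _,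
    Real.rpow_mul (by norm_num : (0:ℝ) ≤ 2)]
  exact h2

lemma psi_nat_le (Ψ : ℝ → ℝ) (hΨmono : Monotone Ψ) (c₂ : ℝ)
    (hgr : ∀ Q > (1 : ℝ), Ψ (Q ^ (2 : ℝ)) ≤ c₂ * Ψ Q)
    (a : ℕ) {y : ℝ} (hy : 1 ≤ y) (hay : (a : ℝ) ≤ 2 * y) :
    Ψ ((2 : ℝ) ^ a) ≤ c₂ * Ψ ((2 : ℝ) ^ y) := by
  have e : (2 : ℝ) ^ a = (2 : ℝ) ^ ((a : ℕ) : ℝ) := (Real.rpow_natCast 2 a).symm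
  calc Ψ ((2 : ℝ) ^ a) = Ψ ((2 : ℝ) ^ ((a : ℕ) : ℝ)) := by rw [e]
    _ ≤ Ψ ((2 : ℝ) ^ (2 * y)) := psi_rpow_mono Ψ hΨmono hay
    _ ≤ c₂ * Ψ ((2 : ℝ) ^ y) := psi_double Ψ c₂ hgr hy

section Main

variable (Ψ f : ℝ → ℝ) (hΨmono : Monotone Ψ) (hΨpos : ∀ t : ℝ, 0 < Ψ t)
  (hmono : MonotoneOn f (Set.Ioi 0)) (hpos : ∀ r > (0 : ℝ), 0 < f r)
  (c₂ : ℝ) (hc₂ : 0 < c₂) (hgr : ∀ Q > (1 : ℝ), Ψ (Q ^ (2 : ℝ)) ≤ c₂ * Ψ Q)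
  (m : ℕ) (hc₂m : c₂ ≤ (2 : ℝ) ^ m)

include hΨmono hΨpos hmono hpos hc₂ hgr hc₂m

/-- the `j`-shift comparison -/
lemma keyB (k j : ℕ) : g1 Ψ f k (j + m) ≤ (2 : ℝ) ^ m * g2 Ψ f k j := by
  unfold g1 g2
  have e1 : 2 * (k + 1) + (j + m) = 2 * (k + 1) + j + m := by ring
  rw [e1]
  set X := 2 * (k + 1) + j with hX
  set y : ℝ := ((k : ℝ) + 1) + ((j : ℝ) + (m : ℝ)) / 2 with hy
  have ecast : ((k : ℝ) + 1) + (((j + m : ℕ) : ℝ)) / 2 = y := by push_cast [hy]; ring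
  rw [ecast]
  have hk0 : (0:ℝ) ≤ (k:ℝ) := Nat.cast_nonneg k
  have hj0 : (0:ℝ) ≤ (j:ℝ) := Nat.cast_nonneg j
  have hm0 : (0:ℝ) ≤ (m:ℝ) := Nat.cast_nonneg m
  have hy1 : 1 ≤ y := by rw [hy]; linarith
  -- the inner argument comparison
  have harg : ((2 : ℝ) ^ (X + m))⁻¹ / Ψ ((2 : ℝ) ^ y)
      ≤ ((2 : ℝ) ^ X)⁻¹ / Ψ ((2 : ℝ) ^ (k + 1 + j)) := by
    rw [div_le_div_iff₀ (hΨpos _) (hΨpos _)]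
    have h1 : Ψ ((2 : ℝ) ^ (k + 1 + j)) ≤ Ψ ((2 : ℝ) ^ (k + 1 + j + m)) :=
      hΨmono (pow_le_pow_right₀ one_le_two (by omega))
    have h2 : Ψ ((2 : ℝ) ^ (k + 1 + j + m)) ≤ c₂ * Ψ ((2 : ℝ) ^ y) := by
      refine psi_nat_le Ψ hΨmono c₂ hgr _ hy1 ?_
      push_cast
      rw [hy]; ring_nf; linarith
    have hpy : 0 < Ψ ((2 : ℝ) ^ y) := hΨpos _
    have hXpos : (0:ℝ) < (2 : ℝ) ^ X := by positivity
    have hmpos : (0:ℝ) < (2 : ℝ) ^ m := by positivity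
    calc ((2 : ℝ) ^ (X + m))⁻¹ * Ψ ((2 : ℝ) ^ (k + 1 + j))
        ≤ ((2 : ℝ) ^ (X + m))⁻¹ * (c₂ * Ψ ((2 : ℝ) ^ y)) := by
          apply mul_le_mul_of_nonneg_left (h1.trans h2) (by positivity)
      _ ≤ ((2 : ℝ) ^ (X + m))⁻¹ * ((2:ℝ) ^ m * Ψ ((2 : ℝ) ^ y)) := by
          apply mul_le_mul_of_nonneg_left (mul_le_mul_of_nonneg_right hc₂m hpy.le)
            (by positivity)
      _ = ((2 : ℝ) ^ X)⁻¹ * Ψ ((2 : ℝ) ^ y) := by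
          rw [pow_add]; field_simp
  -- put it together
  have hf : f (((2 : ℝ) ^ (X + m))⁻¹ / Ψ ((2 : ℝ) ^ y))
      ≤ f (((2 : ℝ) ^ X)⁻¹ / Ψ ((2 : ℝ) ^ (k + 1 + j))) := by
    refine hmono (Set.mem_Ioi.2 (div_pos (by positivity) (hΨpos _)))
      (Set.mem_Ioi.2 (div_pos (by positivity) (hΨpos _))) harg
  calc (2 : ℝ) ^ (X + m) * f (((2 : ℝ) ^ (X + m))⁻¹ / Ψ ((2 : ℝ) ^ y))
      ≤ (2 : ℝ) ^ (X + m) * f (((2 : ℝ) ^ X)⁻¹ / Ψ ((2 : ℝ) ^ (k + 1 + j))) := by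
        apply mul_le_mul_of_nonneg_left hf (by positivity)
    _ = (2 : ℝ) ^ m * ((2 : ℝ) ^ X * f (((2 : ℝ) ^ X)⁻¹ / Ψ ((2 : ℝ) ^ (k + 1 + j)))) := by
        rw [pow_add]; ring

/-- the `k`-shift comparison -/
lemma keyC (k j : ℕ) : g1 Ψ f (k + m) j ≤ (2 : ℝ) ^ (2 * m) * g2 Ψ f k j := by
  unfold g1 g2
  have e1 : 2 * (k + m + 1) + j = 2 * (k + 1) + j + 2 * m := by ring
  rw [e1]
  set X := 2 * (k + 1) + j with hX
  set y : ℝ := (k : ℝ) + (m : ℝ) + 1 + (j : ℝ) / 2 with hy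
  have ecast : (((k + m : ℕ) : ℝ) + 1) + ((j : ℕ) : ℝ) / 2 = y := by push_cast [hy]; ring
  rw [ecast]
  have hk0 : (0:ℝ) ≤ (k:ℝ) := Nat.cast_nonneg k
  have hj0 : (0:ℝ) ≤ (j:ℝ) := Nat.cast_nonneg j
  have hm0 : (0:ℝ) ≤ (m:ℝ) := Nat.cast_nonneg m
  have hy1 : 1 ≤ y := by rw [hy]; linarith
  have hc₂m2 : c₂ ≤ (2:ℝ) ^ (2 * m) :=
    hc₂m.trans (pow_le_pow_right₀ one_le_two (by omega))
  have harg : ((2 : ℝ) ^ (X + 2 * m))⁻¹ / Ψ ((2 : ℝ) ^ y)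
      ≤ ((2 : ℝ) ^ X)⁻¹ / Ψ ((2 : ℝ) ^ (k + 1 + j)) := by
    rw [div_le_div_iff₀ (hΨpos _) (hΨpos _)]
    have h1 : Ψ ((2 : ℝ) ^ (k + 1 + j)) ≤ Ψ ((2 : ℝ) ^ (k + m + 1 + j)) :=
      hΨmono (pow_le_pow_right₀ one_le_two (by omega))
    have h2 : Ψ ((2 : ℝ) ^ (k + m + 1 + j)) ≤ c₂ * Ψ ((2 : ℝ) ^ y) := by
      refine psi_nat_le Ψ hΨmono c₂ hgr _ hy1 ?_
      push_cast
      rw [hy]; ring_nf; linarith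
    have hpy : 0 < Ψ ((2 : ℝ) ^ y) := hΨpos _
    calc ((2 : ℝ) ^ (X + 2 * m))⁻¹ * Ψ ((2 : ℝ) ^ (k + 1 + j))
        ≤ ((2 : ℝ) ^ (X + 2 * m))⁻¹ * (c₂ * Ψ ((2 : ℝ) ^ y)) := by
          apply mul_le_mul_of_nonneg_left (h1.trans h2) (by positivity)
      _ ≤ ((2 : ℝ) ^ (X + 2 * m))⁻¹ * ((2:ℝ) ^ (2 * m) * Ψ ((2 : ℝ) ^ y)) := by
          apply mul_le_mul_of_nonneg_left (mul_le_mul_of_nonneg_right hc₂m2 hpy.le)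
            (by positivity)
      _ = ((2 : ℝ) ^ X)⁻¹ * Ψ ((2 : ℝ) ^ y) := by
          rw [pow_add]; field_simp
  have hf : f (((2 : ℝ) ^ (X + 2 * m))⁻¹ / Ψ ((2 : ℝ) ^ y))
      ≤ f (((2 : ℝ) ^ X)⁻¹ / Ψ ((2 : ℝ) ^ (k + 1 + j))) := by
    refine hmono (Set.mem_Ioi.2 (div_pos (by positivity) (hΨpos _)))
      (Set.mem_Ioi.2 (div_pos (by positivity) (hΨpos _))) harg
  calc (2 : ℝ) ^ (X + 2 * m) * f (((2 : ℝ) ^ (X + 2 * m))⁻¹ / Ψ ((2 : ℝ) ^ y))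
      ≤ (2 : ℝ) ^ (X + 2 * m) * f (((2 : ℝ) ^ X)⁻¹ / Ψ ((2 : ℝ) ^ (k + 1 + j))) := by
        apply mul_le_mul_of_nonneg_left hf (by positivity)
    _ = (2 : ℝ) ^ (2 * m) *
        ((2 : ℝ) ^ X * f (((2 : ℝ) ^ X)⁻¹ / Ψ ((2 : ℝ) ^ (k + 1 + j)))) := by
        rw [pow_add]; ring

end Main

/-- the easy termwise comparison: the second summand is at most the first -/
lemma easy_le (Ψ f : ℝ → ℝ) (hΨmono : Monotone Ψ) (hΨpos : ∀ t : ℝ, 0 < Ψ t)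
    (hmono : MonotoneOn f (Set.Ioi 0)) (k j : ℕ) : g2 Ψ f k j ≤ g1 Ψ f k j := by
  unfold g1 g2
  apply mul_le_mul_of_nonneg_left _ (by positivity)
  have hΨle : Ψ ((2 : ℝ) ^ (((k : ℝ) + 1) + (j : ℝ) / 2)) ≤ Ψ ((2 : ℝ) ^ (k + 1 + j)) := by
    rw [show ((2 : ℝ) ^ (k + 1 + j) : ℝ) = (2 : ℝ) ^ (((k + 1 + j : ℕ)) : ℝ) from
      (Real.rpow_natCast 2 _).symm]
    refine psi_rpow_mono Ψ hΨmono ?_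
    have hj0 : (0:ℝ) ≤ (j:ℝ) := Nat.cast_nonneg j
    push_cast
    linarith
  refine hmono (Set.mem_Ioi.2 (arg2_pos Ψ hΨpos k j)) (Set.mem_Ioi.2 (arg1_pos Ψ hΨpos k j)) ?_
  exact div_le_div_of_nonneg_left (by positivity) (hΨpos _) hΨle

end SSE

/-- If `Ψ` is non-decreasing, positive, and satisfies `Ψ(Q^x) ≍ Ψ(Q)` for all `x > 0`
(with implied constants depending only on `x`), then for a dimension function `f` the
series `∑_{k≥1} ∑_{1≤j<log₂Ψ(2^k)} 2^(2k+j) f(2^(−(2k+j))/Ψ(2^(k+j/2)))` converges if and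
only if `∑_{k≥1} ∑_{1≤j<log₂Ψ(2^k)} 2^(2k+j) f(2^(−(2k+j))/Ψ(2^(k+j)))` converges. -/
theorem series_substitution_equivalence (Ψ : ℝ → ℝ) (hΨmono : Monotone Ψ)
    (hΨpos : ∀ t : ℝ, 0 < Ψ t)
    (hΨgrowth : ∀ x > (0 : ℝ), ∃ c₁ > (0 : ℝ), ∃ c₂ > (0 : ℝ), ∀ Q > (1 : ℝ),
      c₁ * Ψ Q ≤ Ψ (Q ^ x) ∧ Ψ (Q ^ x) ≤ c₂ * Ψ Q)
    (f : ℝ → ℝ) (hmono : MonotoneOn f (Set.Ioi 0)) (hcont : ContinuousOn f (Set.Ioi 0))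
    (hpos : ∀ r > (0 : ℝ), 0 < f r)
    (h0 : Filter.Tendsto f (nhdsWithin 0 (Set.Ioi 0)) (nhds 0)) :
    (Summable fun k : ℕ =>
        ∑ j ∈ Finset.Ico 1 ⌈Real.logb 2 (Ψ ((2 : ℝ) ^ (k + 1)))⌉₊,
          (2 : ℝ) ^ (2 * (k + 1) + j) *
            f (((2 : ℝ) ^ (2 * (k + 1) + j))⁻¹ /
              Ψ ((2 : ℝ) ^ (((k : ℝ) + 1) + (j : ℝ) / 2)))) ↔
      (Summable fun k : ℕ =>
        ∑ j ∈ Finset.Ico 1 ⌈Real.logb 2 (Ψ ((2 : ℝ) ^ (k + 1)))⌉₊,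
          (2 : ℝ) ^ (2 * (k + 1) + j) *
            f (((2 : ℝ) ^ (2 * (k + 1) + j))⁻¹ / Ψ ((2 : ℝ) ^ (k + 1 + j)))) := by
  classical
  obtain ⟨c₁, hc₁, c₂, hc₂, hgr'⟩ := hΨgrowth 2 (by norm_num)
  have hgr : ∀ Q > (1 : ℝ), Ψ (Q ^ (2 : ℝ)) ≤ c₂ * Ψ Q := fun Q hQ => (hgr' Q hQ).2
  obtain ⟨m, hm⟩ := exists_nat_gt c₂
  have hc₂m : c₂ ≤ (2 : ℝ) ^ m := by
    have h1 : (m : ℝ) < (2 : ℝ) ^ m := by exact_mod_cast (Nat.lt_two_pow_self : m < 2 ^ m)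
    linarith
  show (Summable fun k : ℕ => ∑ j ∈ Finset.Ico 1 (SSE.NN Ψ k), SSE.g1 Ψ f k j) ↔
    (Summable fun k : ℕ => ∑ j ∈ Finset.Ico 1 (SSE.NN Ψ k), SSE.g2 Ψ f k j)
  set S1 : ℕ → ℝ := fun k => ∑ j ∈ Finset.Ico 1 (SSE.NN Ψ k), SSE.g1 Ψ f k j with hS1
  set S2 : ℕ → ℝ := fun k => ∑ j ∈ Finset.Ico 1 (SSE.NN Ψ k), SSE.g2 Ψ f k j with hS2
  have hS1nonneg : ∀ k, 0 ≤ S1 k := fun k =>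
    Finset.sum_nonneg fun j _ => SSE.g1_nonneg Ψ f hΨpos hpos k j
  have hS2nonneg : ∀ k, 0 ≤ S2 k := fun k =>
    Finset.sum_nonneg fun j _ => SSE.g2_nonneg Ψ f hΨpos hpos k j
  constructor
  · -- easy direction: `S2 ≤ S1` termwise
    intro h
    refine Summable.of_nonneg_of_le hS2nonneg (fun k => ?_) h
    exact Finset.sum_le_sum fun j _ => SSE.easy_le Ψ f hΨmono hΨpos hmono k j
  · -- hard direction
    intro h
    -- monotonicity of the inner index bound
    have hNmono : Monotone (SSE.NN Ψ) := by
      intro a b hab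
      apply Nat.ceil_le_ceil
      refine Real.logb_le_logb_of_le (by norm_num) (hΨpos _) ?_
      exact hΨmono (pow_le_pow_right₀ one_le_two (by omega))
    -- the truncated bound is monotone and bounded, hence attains a maximum
    set NE : ℕ → ℕ := fun k => min (SSE.NN Ψ k) (m + 1) with hNE
    have hNEmono : Monotone NE := fun a b hab =>
      le_min ((min_le_left _ _).trans (hNmono hab)) (min_le_right _ _)
    obtain ⟨M, hMmax⟩ : ∃ M, ∀ k, NE k ≤ NE M := by
      have hne : (Set.range NE).Nonempty := ⟨NE 0, ⟨0, rfl⟩⟩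
      have hbdd : BddAbove (Set.range NE) :=
        ⟨m + 1, by rintro x ⟨k, rfl⟩; exact min_le_right _ _⟩
      obtain ⟨M, hM⟩ := Nat.sSup_mem hne hbdd
      exact ⟨M, fun k => by rw [hM]; exact le_csSup hbdd ⟨k, rfl⟩⟩
    have hconst : ∀ k, M ≤ k → NE k = NE M := fun k hk =>
      le_antisymm (hMmax k) (hNEmono hk)
    have hP : ∀ n j, j < SSE.NN Ψ (n + M + m) → j ≤ m → j < SSE.NN Ψ (n + M) := by
      intro n j h2 h3
      have e1 := hconst (n + M + m) (by omega)
      have e2 := hconst (n + M) (by omega)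
      have h4 : j < NE (n + M + m) := lt_min h2 (by omega)
      rw [e1, ← e2] at h4
      exact lt_of_lt_of_le h4 (min_le_left _ _)
    -- the key estimate, valid from `M` on
    have key : ∀ n, S1 (n + M + m) ≤
        (2 : ℝ) ^ (2 * m) * S2 (n + M) + (2 : ℝ) ^ m * S2 (n + M + m) := by
      intro n
      simp only [hS1, hS2]
      rw [← Finset.sum_filter_add_sum_filter_not (Finset.Ico 1 (SSE.NN Ψ (n + M + m)))
        (fun j => j < SSE.NN Ψ (n + M)) (SSE.g1 Ψ f (n + M + m))]
      apply add_le_add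
      · calc ∑ j ∈ Finset.filter (fun j => j < SSE.NN Ψ (n + M))
              (Finset.Ico 1 (SSE.NN Ψ (n + M + m))), SSE.g1 Ψ f (n + M + m) j
            ≤ ∑ j ∈ Finset.filter (fun j => j < SSE.NN Ψ (n + M))
              (Finset.Ico 1 (SSE.NN Ψ (n + M + m))), (2 : ℝ) ^ (2 * m) * SSE.g2 Ψ f (n + M) j :=
              Finset.sum_le_sum fun j _ =>
                SSE.keyC Ψ f hΨmono hΨpos hmono hpos c₂ hc₂ hgr m hc₂m (n + M) j
          _ = (2 : ℝ) ^ (2 * m) * ∑ j ∈ Finset.filter (fun j => j < SSE.NN Ψ (n + M))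
              (Finset.Ico 1 (SSE.NN Ψ (n + M + m))), SSE.g2 Ψ f (n + M) j := by
              rw [Finset.mul_sum]
          _ ≤ (2 : ℝ) ^ (2 * m) *
              ∑ j ∈ Finset.Ico 1 (SSE.NN Ψ (n + M)), SSE.g2 Ψ f (n + M) j := by
              refine mul_le_mul_of_nonneg_left ?_ (by positivity)
              refine Finset.sum_le_sum_of_subset_of_nonneg ?_ ?_
              · intro j hj
                simp only [Finset.mem_filter, Finset.mem_Ico] at hj ⊢
                omega
              · intro j _ _
                exact SSE.g2_nonneg Ψ f hΨpos hpos _ _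
      · set T := Finset.filter (fun j => ¬ j < SSE.NN Ψ (n + M))
          (Finset.Ico 1 (SSE.NN Ψ (n + M + m))) with hT
        have hTm : ∀ j ∈ T, m < j := by
          intro j hj
          simp only [hT, Finset.mem_filter, Finset.mem_Ico] at hj
          by_contra hcon
          push_neg at hcon
          exact hj.2 (hP n j hj.1.2 hcon)
        calc ∑ j ∈ T, SSE.g1 Ψ f (n + M + m) j
            ≤ ∑ j ∈ T, (2 : ℝ) ^ m * SSE.g2 Ψ f (n + M + m) (j - m) := by
              refine Finset.sum_le_sum fun j hj => ?_
              have hmj := hTm j hj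
              have hkb := SSE.keyB Ψ f hΨmono hΨpos hmono hpos c₂ hc₂ hgr m hc₂m
                (n + M + m) (j - m)
              rwa [Nat.sub_add_cancel hmj.le] at hkb
          _ = (2 : ℝ) ^ m * ∑ j ∈ T, SSE.g2 Ψ f (n + M + m) (j - m) := by
              rw [Finset.mul_sum]
          _ ≤ (2 : ℝ) ^ m *
              ∑ j ∈ Finset.Ico 1 (SSE.NN Ψ (n + M + m)), SSE.g2 Ψ f (n + M + m) j := by
              refine mul_le_mul_of_nonneg_left ?_ (by positivity)
              have hinj : ∀ x ∈ T, ∀ y ∈ T, x - m = y - m → x = y := by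
                intro x hx y hy hxy
                have h1 := hTm x hx
                have h2 := hTm y hy
                omega
              rw [← Finset.sum_image hinj]
              refine Finset.sum_le_sum_of_subset_of_nonneg ?_ ?_
              · intro i hi
                simp only [Finset.mem_image] at hi
                obtain ⟨j, hj, rfl⟩ := hi
                have hmj := hTm j hj
                simp only [hT, Finset.mem_filter, Finset.mem_Ico] at hj
                exact Finset.mem_Ico.2 ⟨by omega, by omega⟩
              · intro i _ _
                exact SSE.g2_nonneg Ψ f hΨpos hpos _ _
    -- assemble summability
    have hb1 : Summable (fun n => S2 (n + M)) := (summable_nat_add_iff M).2 h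
    have hb2 : Summable (fun n => S2 (n + (M + m))) := (summable_nat_add_iff (M + m)).2 h
    have hbound : Summable
        (fun n => (2 : ℝ) ^ (2 * m) * S2 (n + M) + (2 : ℝ) ^ m * S2 (n + M + m)) := by
      refine Summable.add (hb1.mul_left _) ?_
      have e : (fun n => (2 : ℝ) ^ m * S2 (n + M + m))
          = fun n => (2 : ℝ) ^ m * S2 (n + (M + m)) := by
        funext n; rw [Nat.add_assoc]
      rw [e]
      exact hb2.mul_left _
    have hshift : Summable (fun n => S1 (n + (M + m))) := by
      refine Summable.of_nonneg_of_le (fun n => hS1nonneg _) (fun n => ?_) hbound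
      rw [show n + (M + m) = n + M + m from (Nat.add_assoc n M m).symm]
      exact key n
    exact (summable_nat_add_iff (M + m)).1 hshift
end
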